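/- For any two vectors ψ₁, ψ₂ ∈ ℂ²⊗ℂ²⊗ℂ² (i.e., ℂ⁸ indexed by Fin 2 × Fin 2 × Fin 2) there exist nonzero vectors e, f, g ∈ ℂ² such that the product vector e⊗f⊗g is orthogonal to both ψ₁ and ψ₂ with respect to the standard Hermitian inner product. -/
import Mathlib


open Matrix BigOperators ComplexOrder

noncomputable section

/-- Partial transpose with respect to Alice (the first `Fin 2` factor). -/
def ptA {N : ℕ} (ρ : Matrix (Fin 2 × Fin 2 × Fin N) (Fin 2 × Fin 2 × Fin N) ℂ) :
    Matrix (Fin 2 × Fin 2 × Fin N) (Fin 2 × Fin 2 × Fin N) ℂ :=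
  fun x y => ρ (y.1, x.2.1, x.2.2) (x.1, y.2.1, y.2.2)

/-- Partial transpose with respect to Bob (the second `Fin 2` factor). -/
def ptB {N : ℕ} (ρ : Matrix (Fin 2 × Fin 2 × Fin N) (Fin 2 × Fin 2 × Fin N) ℂ) :
    Matrix (Fin 2 × Fin 2 × Fin N) (Fin 2 × Fin 2 × Fin N) ℂ :=
  fun x y => ρ (x.1, y.2.1, x.2.2) (y.1, x.2.1, y.2.2)

/-- Partial transpose with respect to Alice and Bob. -/
def ptAB {N : ℕ} (ρ : Matrix (Fin 2 × Fin 2 × Fin N) (Fin 2 × Fin 2 × Fin N) ℂ) :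
    Matrix (Fin 2 × Fin 2 × Fin N) (Fin 2 × Fin 2 × Fin N) ℂ :=
  ptB (ptA ρ)

/-- PPT: all partial transposes are positive semidefinite. -/
def IsPPT {N : ℕ} (ρ : Matrix (Fin 2 × Fin 2 × Fin N) (Fin 2 × Fin 2 × Fin N) ℂ) : Prop :=
  (ptA ρ).PosSemidef ∧ (ptB ρ).PosSemidef ∧ (ptAB ρ).PosSemidef

/-- The product vector `e ⊗ f ⊗ g`. -/
def prodVec {N : ℕ} (e f : Fin 2 → ℂ) (g : Fin N → ℂ) : Fin 2 × Fin 2 × Fin N → ℂ :=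
  fun x => e x.1 * f x.2.1 * g x.2.2

/-- The rank-one outer product `v v†`. -/
def outer {n : Type*} (v : n → ℂ) : Matrix n n ℂ := Matrix.vecMulVec v (star v)

/-- Full separability of a tripartite state. -/
def SeparableState {N : ℕ} (ρ : Matrix (Fin 2 × Fin 2 × Fin N) (Fin 2 × Fin 2 × Fin N) ℂ) : Prop :=
  ∃ (k : ℕ) (p : Fin k → ℝ) (e f : Fin k → Fin 2 → ℂ) (g : Fin k → Fin N → ℂ),
    (∀ i, 0 ≤ p i) ∧
    ρ = ∑ i, (p i : ℂ) • outer (prodVec (e i) (f i) (g i))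

/-- Reduced matrix of Alice. -/
def redA {N : ℕ} (ρ : Matrix (Fin 2 × Fin 2 × Fin N) (Fin 2 × Fin 2 × Fin N) ℂ) :
    Matrix (Fin 2) (Fin 2) ℂ :=
  fun a a' => ∑ b : Fin 2, ∑ c : Fin N, ρ (a, b, c) (a', b, c)

/-- Reduced matrix of Bob. -/
def redB {N : ℕ} (ρ : Matrix (Fin 2 × Fin 2 × Fin N) (Fin 2 × Fin 2 × Fin N) ℂ) :
    Matrix (Fin 2) (Fin 2) ℂ :=
  fun b b' => ∑ a : Fin 2, ∑ c : Fin N, ρ (a, b, c) (a, b', c)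

/-- Reduced matrix of Charlie. -/
def redC {N : ℕ} (ρ : Matrix (Fin 2 × Fin 2 × Fin N) (Fin 2 × Fin 2 × Fin N) ℂ) :
    Matrix (Fin N) (Fin N) ℂ :=
  fun c c' => ∑ a : Fin 2, ∑ b : Fin 2, ρ (a, b, c) (a, b, c')

/-- `ρ` is supported on `ℂ² ⊗ ℂ² ⊗ ℂᴺ`: all single-party reduced matrices have full rank. -/
def SupportedOn {N : ℕ} (ρ : Matrix (Fin 2 × Fin 2 × Fin N) (Fin 2 × Fin 2 × Fin N) ℂ) : Prop :=
  (redA ρ).rank = 2 ∧ (redB ρ).rank = 2 ∧ (redC ρ).rank = N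


/-- Auxiliary: every binary quadratic form over `ℂ` has a nontrivial zero. -/
lemma aux_quad_root (A B C : ℂ) : ∃ g0 g1 : ℂ, ¬(g0 = 0 ∧ g1 = 0) ∧
    A * g1 ^ 2 + B * (g0 * g1) + C * g0 ^ 2 = 0 := by
  by_cases hA : A = 0
  · exact ⟨0, 1, by simp, by simp [hA]⟩
  · have hdeg : 0 < (Polynomial.C A * Polynomial.X ^ 2 + Polynomial.C B * Polynomial.X +
        Polynomial.C C).degree := by
      rw [Polynomial.degree_quadratic hA]; norm_num
    obtain ⟨r, hr⟩ := Complex.exists_root hdeg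
    refine ⟨1, r, by simp, ?_⟩
    have h : A * r ^ 2 + B * r + C = 0 := by simpa [Polynomial.IsRoot] using hr
    linear_combination h

/-- Auxiliary: a vector in `ℂ²` with a nonzero coordinate is nonzero. -/
lemma aux_vec_ne_zero {x y : ℂ} (h : ¬(x = 0 ∧ y = 0)) : (![x, y] : Fin 2 → ℂ) ≠ 0 := by
  intro hz
  exact h ⟨by simpa using congrFun hz 0, by simpa using congrFun hz 1⟩

/-- Auxiliary: expansion of the inner product against a product vector with `e = ![1,0]`. -/
lemma aux_dot_expand (ψ : Fin 2 × Fin 2 × Fin 2 → ℂ) (f0 f1 g0 g1 : ℂ) :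
    star ψ ⬝ᵥ prodVec ![1, 0] ![f0, f1] ![g0, g1] =
      (starRingEnd ℂ (ψ (0,0,0)) * g0 + starRingEnd ℂ (ψ (0,0,1)) * g1) * f0 +
      (starRingEnd ℂ (ψ (0,1,0)) * g0 + starRingEnd ℂ (ψ (0,1,1)) * g1) * f1 := by
  simp [dotProduct, prodVec, Fintype.sum_prod_type, Fin.sum_univ_two]
  ring

/-- For any two vectors in `ℂ²⊗ℂ²⊗ℂ²` there is a nonzero product vector orthogonal to both. -/
theorem exists_product_vector_orthogonal_to_two
    (ψ₁ ψ₂ : Fin 2 × Fin 2 × Fin 2 → ℂ) :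
    ∃ e f g : Fin 2 → ℂ, e ≠ 0 ∧ f ≠ 0 ∧ g ≠ 0 ∧
      star ψ₁ ⬝ᵥ prodVec e f g = 0 ∧ star ψ₂ ⬝ᵥ prodVec e f g = 0 := by
  set a00 := starRingEnd ℂ (ψ₁ (0,0,0)) with ha00
  set a01 := starRingEnd ℂ (ψ₁ (0,0,1)) with ha01
  set a10 := starRingEnd ℂ (ψ₁ (0,1,0)) with ha10
  set a11 := starRingEnd ℂ (ψ₁ (0,1,1)) with ha11
  set b00 := starRingEnd ℂ (ψ₂ (0,0,0)) with hb00
  set b01 := starRingEnd ℂ (ψ₂ (0,0,1)) with hb01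
  set b10 := starRingEnd ℂ (ψ₂ (0,1,0)) with hb10
  set b11 := starRingEnd ℂ (ψ₂ (0,1,1)) with hb11
  obtain ⟨g0, g1, hg, hroot⟩ := aux_quad_root
    (a01 * b11 - a11 * b01)
    (a00 * b11 + a01 * b10 - a10 * b01 - a11 * b00)
    (a00 * b10 - a10 * b00)
  set w10 := a00 * g0 + a01 * g1 with hw10
  set w11 := a10 * g0 + a11 * g1 with hw11
  set w20 := b00 * g0 + b01 * g1 with hw20
  set w21 := b10 * g0 + b11 * g1 with hw21
  have hD : w10 * w21 - w11 * w20 = 0 := by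
    rw [hw10, hw11, hw20, hw21]; linear_combination hroot
  have he : (![1, 0] : Fin 2 → ℂ) ≠ 0 := aux_vec_ne_zero (by norm_num)
  have hgv : (![g0, g1] : Fin 2 → ℂ) ≠ 0 := aux_vec_ne_zero hg
  by_cases h1 : w10 = 0 ∧ w11 = 0
  · by_cases h2 : w20 = 0 ∧ w21 = 0
    · refine ⟨![1, 0], ![1, 0], ![g0, g1], he, he, hgv, ?_, ?_⟩ <;>
        rw [aux_dot_expand]
      · rw [← ha00, ← ha01, ← ha10, ← ha11, ← hw10, ← hw11, h1.1, h1.2]; ring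
      · rw [← hb00, ← hb01, ← hb10, ← hb11, ← hw20, ← hw21, h2.1, h2.2]; ring
    · refine ⟨![1, 0], ![w21, -w20], ![g0, g1], he,
        aux_vec_ne_zero (by rintro ⟨hx, hy⟩; exact h2 ⟨neg_eq_zero.mp hy, hx⟩), hgv, ?_, ?_⟩ <;>
        rw [aux_dot_expand]
      · rw [← ha00, ← ha01, ← ha10, ← ha11, ← hw10, ← hw11, h1.1, h1.2]; ring
      · rw [← hb00, ← hb01, ← hb10, ← hb11, ← hw20, ← hw21]; ring
  · refine ⟨![1, 0], ![w11, -w10], ![g0, g1], he,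
      aux_vec_ne_zero (by rintro ⟨hx, hy⟩; exact h1 ⟨neg_eq_zero.mp hy, hx⟩), hgv, ?_, ?_⟩ <;>
      rw [aux_dot_expand]
    · rw [← ha00, ← ha01, ← ha10, ← ha11, ← hw10, ← hw11]; ring
    · rw [← hb00, ← hb01, ← hb10, ← hb11, ← hw20, ← hw21]; linear_combination -hD


end
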